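/- Let Σ_0, Σ_1, ..., Σ_K be symmetric positive definite p×p real matrices, α_0, ..., α_K nonnegative reals summing to 1, and set Σ̄ = Σ_{k=0}^K α_k Σ_k. Suppose w^(0), ..., w^(K), β ∈ ℝ^p satisfy w^(0) = β and ‖w^(k) − β‖₁ ≤ η for all k, and suppose max_k ‖Σ̄⁻¹ Σ_k‖₁ ≤ C₁ where ‖·‖₁ is the maximum absolute column sum. If w* ∈ ℝ^p satisfies Σ_{k=0}^K α_k Σ_k (w^(k) − w*) = 0, then ‖w* − β‖₁ ≤ C₁ η. -/

import Mathlib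

open Finset Matrix

/-- ℓ¹ norm of a vector. -/
noncomputable def l1 {p : ℕ} (v : Fin p → ℝ) : ℝ := ∑ i, |v i|

/-- Induced operator 1-norm of a matrix: maximum absolute column sum. -/
noncomputable def matNorm1 {p : ℕ} (A : Matrix (Fin p) (Fin p) ℝ) : ℝ :=
  ⨆ j, ∑ i, |A i j|

lemma l1_nonneg {p : ℕ} (v : Fin p → ℝ) : 0 ≤ l1 v :=
  Finset.sum_nonneg fun i _ => abs_nonneg _

lemma matNorm1_nonneg {p : ℕ} (A : Matrix (Fin p) (Fin p) ℝ) : 0 ≤ matNorm1 A :=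
  Real.iSup_nonneg fun j => Finset.sum_nonneg fun i _ => abs_nonneg _

lemma col_sum_le_matNorm1 {p : ℕ} (A : Matrix (Fin p) (Fin p) ℝ) (j : Fin p) :
    ∑ i, |A i j| ≤ matNorm1 A :=
  le_ciSup (f := fun j => ∑ i, |A i j|) (Set.Finite.bddAbove (Set.finite_range _)) j

lemma sum_mulVec' {p K : ℕ} (M : Fin K → Matrix (Fin p) (Fin p) ℝ) (v : Fin p → ℝ) :
    (∑ k, M k).mulVec v = ∑ k, (M k).mulVec v := by
  ext i
  simp [Matrix.mulVec, dotProduct, Matrix.sum_apply, Finset.sum_mul]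
  rw [Finset.sum_comm]

lemma l1_mulVec_le {p : ℕ} (A : Matrix (Fin p) (Fin p) ℝ) (v : Fin p → ℝ) :
    l1 (A.mulVec v) ≤ matNorm1 A * l1 v := by
  unfold l1
  calc ∑ i, |A.mulVec v i| ≤ ∑ i, ∑ j, |A i j| * |v j| := by
        refine Finset.sum_le_sum fun i _ => ?_
        simp only [Matrix.mulVec, dotProduct]
        calc |∑ j, A i j * v j| ≤ ∑ j, |A i j * v j| := Finset.abs_sum_le_sum_abs _ _
          _ = ∑ j, |A i j| * |v j| := by simp [abs_mul]
    _ = ∑ j, (∑ i, |A i j|) * |v j| := by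
        rw [Finset.sum_comm]; simp [Finset.sum_mul]
    _ ≤ ∑ j, matNorm1 A * |v j| := by
        refine Finset.sum_le_sum fun j _ => ?_
        exact mul_le_mul_of_nonneg_right (col_sum_le_matNorm1 A j) (abs_nonneg _)
    _ = matNorm1 A * ∑ j, |v j| := by rw [Finset.mul_sum]

lemma l1_sum_le {p K : ℕ} (f : Fin K → Fin p → ℝ) :
    l1 (∑ k, f k) ≤ ∑ k, l1 (f k) := by
  unfold l1
  calc ∑ i, |(∑ k, f k) i| = ∑ i, |∑ k, f k i| := by simp [Finset.sum_apply]
    _ ≤ ∑ i, ∑ k, |f k i| :=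
        Finset.sum_le_sum fun i _ => Finset.abs_sum_le_sum_abs _ _
    _ = ∑ k, ∑ i, |f k i| := Finset.sum_comm

lemma l1_smul {p : ℕ} (c : ℝ) (v : Fin p → ℝ) : l1 (c • v) = |c| * l1 v := by
  unfold l1
  simp [abs_mul, Finset.mul_sum]

/-- Lemma A.1: the pooled population coefficient `wstar` is ℓ¹-close to the target `β`. -/
theorem pooled_coefficient_l1_bound {p K : ℕ}
    (Sig : Fin (K + 1) → Matrix (Fin p) (Fin p) ℝ)
    (hSym : ∀ k, (Sig k).IsSymm) (hPD : ∀ k, (Sig k).PosDef)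
    (α : Fin (K + 1) → ℝ) (hα : ∀ k, 0 ≤ α k) (hαsum : ∑ k, α k = 1)
    (w : Fin (K + 1) → Fin p → ℝ) (β wstar : Fin p → ℝ) (η C₁ : ℝ)
    (hw0 : w 0 = β)
    (hsim : ∀ k, l1 (w k - β) ≤ η)
    (hC : ∀ k, matNorm1 ((∑ j, α j • Sig j)⁻¹ * Sig k) ≤ C₁)
    (hopt : ∑ k, α k • (Sig k).mulVec (w k - wstar) = 0) :
    l1 (wstar - β) ≤ C₁ * η := by
  set S : Matrix (Fin p) (Fin p) ℝ := ∑ j, α j • Sig j with hSdef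
  -- η and C₁ are nonnegative
  have hη : 0 ≤ η := by
    have := hsim 0
    rw [hw0, sub_self] at this
    have h0 : l1 (0 : Fin p → ℝ) = 0 := by simp [l1]
    linarith
  have hC₁ : 0 ≤ C₁ := le_trans (matNorm1_nonneg _) (hC 0)
  -- S is positive definite
  have hSPD : S.PosDef := by
    refine Matrix.PosDef.of_dotProduct_mulVec_pos ?_ ?_
    · show Sᴴ = S
      rw [hSdef]
      rw [Matrix.conjTranspose_sum]
      refine Finset.sum_congr rfl fun k _ => ?_
      rw [Matrix.conjTranspose_smul]
      simp only [star_trivial]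
      rw [show (Sig k)ᴴ = Sig k from (hPD k).1]
    · intro x hx
      obtain ⟨k0, hk0⟩ : ∃ k, 0 < α k := by
        by_contra h
        push_neg at h
        have : ∀ k ∈ Finset.univ, α k = 0 := fun k _ => le_antisymm (h k) (hα k)
        rw [Finset.sum_congr rfl this] at hαsum
        simp at hαsum
      have hmv : S.mulVec x = ∑ k, α k • (Sig k).mulVec x := by
        rw [hSdef, sum_mulVec']
        refine Finset.sum_congr rfl fun k _ => ?_
        rw [Matrix.smul_mulVec]
      rw [hmv]
      have hterm : ∀ k, star x ⬝ᵥ (α k • (Sig k).mulVec x) = α k * (star x ⬝ᵥ (Sig k).mulVec x) := by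
        intro k
        simp [dotProduct, Finset.mul_sum, mul_left_comm]
      have hdps : star x ⬝ᵥ (∑ k, α k • (Sig k).mulVec x) = ∑ k, star x ⬝ᵥ (α k • (Sig k).mulVec x) := by
        simp only [dotProduct, Finset.sum_apply, Finset.mul_sum]
        rw [Finset.sum_comm]
      rw [hdps]
      refine Finset.sum_pos' (fun k _ => ?_) ⟨k0, Finset.mem_univ k0, ?_⟩
      · rw [hterm k]
        exact mul_nonneg (hα k) ((hPD k).posSemidef.dotProduct_mulVec_nonneg x)
      · rw [hterm k0]
        exact mul_pos hk0 ((hPD k0).dotProduct_mulVec_pos hx)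
  have hSinv : S⁻¹ * S = 1 := Matrix.nonsing_inv_mul S (isUnit_iff_ne_zero.mpr hSPD.det_pos.ne')
  -- key identity: S (wstar - β) = ∑ α_k Σ_k (w k - β)
  have hkey : S.mulVec (wstar - β) = ∑ k, α k • (Sig k).mulVec (w k - β) := by
    have h1 : ∑ k, α k • (Sig k).mulVec (w k) = S.mulVec wstar := by
      have : ∑ k, α k • ((Sig k).mulVec (w k) - (Sig k).mulVec wstar) = 0 := by
        rw [← hopt]
        refine Finset.sum_congr rfl fun k _ => ?_
        rw [Matrix.mulVec_sub]
      have h2 : ∑ k, (α k • (Sig k).mulVec (w k) - α k • (Sig k).mulVec wstar) = 0 := by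
        rw [← this]
        refine Finset.sum_congr rfl fun k _ => ?_
        rw [smul_sub]
      rw [Finset.sum_sub_distrib] at h2
      have h3 : S.mulVec wstar = ∑ k, α k • (Sig k).mulVec wstar := by
        rw [hSdef, sum_mulVec']
        exact Finset.sum_congr rfl fun k _ => Matrix.smul_mulVec _ _ _
      rw [h3]
      exact sub_eq_zero.mp h2
    have h4 : S.mulVec β = ∑ k, α k • (Sig k).mulVec β := by
      rw [hSdef, sum_mulVec']
      exact Finset.sum_congr rfl fun k _ => Matrix.smul_mulVec _ _ _
    rw [Matrix.mulVec_sub, ← h1, h4, ← Finset.sum_sub_distrib]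
    refine Finset.sum_congr rfl fun k _ => ?_
    rw [← smul_sub, ← Matrix.mulVec_sub]
  -- recover wstar - β
  have hrec : wstar - β = ∑ k, α k • ((S⁻¹ * Sig k).mulVec (w k - β)) := by
    have : wstar - β = S⁻¹.mulVec (S.mulVec (wstar - β)) := by
      rw [Matrix.mulVec_mulVec, hSinv, Matrix.one_mulVec]
    rw [this, hkey]
    have : S⁻¹.mulVec (∑ k, α k • (Sig k).mulVec (w k - β))
        = ∑ k, S⁻¹.mulVec (α k • (Sig k).mulVec (w k - β)) := by
      ext i
      simp [Matrix.mulVec, dotProduct, Finset.sum_apply, Finset.mul_sum]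
      rw [Finset.sum_comm]
    rw [this]
    refine Finset.sum_congr rfl fun k _ => ?_
    rw [Matrix.mulVec_smul, Matrix.mulVec_mulVec]
  rw [hrec]
  calc l1 (∑ k, α k • ((S⁻¹ * Sig k).mulVec (w k - β)))
      ≤ ∑ k, l1 (α k • ((S⁻¹ * Sig k).mulVec (w k - β))) := l1_sum_le _
    _ ≤ ∑ k, α k * (C₁ * η) := by
        refine Finset.sum_le_sum fun k _ => ?_
        rw [l1_smul, abs_of_nonneg (hα k)]
        refine mul_le_mul_of_nonneg_left ?_ (hα k)
        calc l1 ((S⁻¹ * Sig k).mulVec (w k - β))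
            ≤ matNorm1 (S⁻¹ * Sig k) * l1 (w k - β) := l1_mulVec_le _ _
          _ ≤ C₁ * η :=
              mul_le_mul (hC k) (hsim k) (l1_nonneg _) hC₁
    _ = C₁ * η := by rw [← Finset.sum_mul, hαsum, one_mul]
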